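/- Let n, m be positive integers and G : {1,…,n} → {1,…,m} a group assignment of coordinates. Let l, u ∈ ℝ^n with l_i ≤ 0 ≤ u_i for all i, let s ∈ ℝ^n, and let L > 0, λ > 0. Define δ* ∈ ℝ^n groupwise by: for each group j, if ‖s_{G_j}‖² − ‖(Π_{[l,u]}(s) − s)_{G_j}‖² > 2λ/L then δ*_i = Π_{[l,u]}(s)_i for every coordinate i with G(i) = j, and otherwise δ*_i = 0 for every such i. Then δ* lies in the box [l,u], and for every δ in the box [l,u] one has (L/2)‖δ* − s‖² + λ‖δ*‖_{2,0} ≤ (L/2)‖δ − s‖² + λ‖δ‖_{2,0}; that is, δ* is a global minimizer of the group-ℓ0-regularized box-constrained proximal problem. -/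

import Mathlib

/-- Componentwise clamp (projection onto the box `[l, u]`). -/
noncomputable def clampProj {n : ℕ} (l u s : Fin n → ℝ) : Fin n → ℝ :=
  fun i => max (l i) (min (u i) (s i))

/-- Membership in the box `[l, u]`. -/
def inBox {n : ℕ} (l u δ : Fin n → ℝ) : Prop :=
  ∀ i, l i ≤ δ i ∧ δ i ≤ u i

/-- The group ℓ_{2,0} "norm": number of groups `j` whose restriction `δ_{G_j}` is nonzero. -/
noncomputable def groupL20 {n m : ℕ} (G : Fin n → Fin m) (δ : Fin n → ℝ) : ℕ :=
  Nat.card {j : Fin m // ∃ i, G i = j ∧ δ i ≠ 0}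

lemma clamp_sq_le {a b x t : ℝ} (hab : a ≤ b) (h1 : a ≤ x) (h2 : x ≤ b) :
    (max a (min b t) - t) ^ 2 ≤ (x - t) ^ 2 := by
  rcases le_total t a with h | h
  · rw [min_eq_right (h.trans hab), max_eq_left h]
    nlinarith
  · rcases le_total t b with h' | h'
    · rw [min_eq_right h', max_eq_right h]
      nlinarith [sq_nonneg (x - t)]
    · rw [min_eq_left h', max_eq_right hab]
      nlinarith

/-- The groupwise hard-thresholding point `δ*` is a global minimizer of the
group-ℓ0-regularized box-constrained proximal problem. -/
theorem group_l0_prox_minimizer (n m : ℕ) (hn : 0 < n) (hm : 0 < m)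
    (G : Fin n → Fin m)
    (l u s : Fin n → ℝ) (hlu : ∀ i, l i ≤ 0 ∧ 0 ≤ u i)
    (L lam : ℝ) (hL : 0 < L) (hlam : 0 < lam)
    (δstar : Fin n → ℝ)
    (hδstar : ∀ i : Fin n,
      δstar i =
        if (∑ i' ∈ Finset.univ.filter (fun i' => G i' = G i), (s i') ^ 2)
            - (∑ i' ∈ Finset.univ.filter (fun i' => G i' = G i),
                (clampProj l u s i' - s i') ^ 2) > 2 * lam / L
        then clampProj l u s i else 0) :
    inBox l u δstar ∧
      ∀ δ : Fin n → ℝ, inBox l u δ →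
        L / 2 * (∑ i, (δstar i - s i) ^ 2) + lam * (groupL20 G δstar : ℝ) ≤
          L / 2 * (∑ i, (δ i - s i) ^ 2) + lam * (groupL20 G δ : ℝ) := by
  classical
  have hbox : inBox l u δstar := by
    intro i
    have h1 := (hlu i).1
    have h2 := (hlu i).2
    rw [hδstar i]
    split
    · exact ⟨le_max_left _ _, max_le (h1.trans h2) (min_le_left _ _)⟩
    · exact ⟨h1, h2⟩
  refine ⟨hbox, fun δ hδ => ?_⟩
  have hcard : ∀ x : Fin n → ℝ, (groupL20 G x : ℝ) =
      ∑ j : Fin m, (if ∃ i, G i = j ∧ x i ≠ 0 then (1 : ℝ) else 0) := by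
    intro x
    rw [groupL20, Nat.card_eq_fintype_card, Fintype.card_subtype, Finset.sum_boole]
  have hfib : ∀ x : Fin n → ℝ,
      (∑ i, (x i - s i) ^ 2) =
      ∑ j : Fin m, ∑ i ∈ Finset.univ.filter (fun i => G i = j), (x i - s i) ^ 2 := by
    intro x
    exact (Finset.sum_fiberwise _ _ _).symm
  rw [hcard, hcard, hfib, hfib, Finset.mul_sum, Finset.mul_sum, Finset.mul_sum, Finset.mul_sum,
    ← Finset.sum_add_distrib, ← Finset.sum_add_distrib]
  apply Finset.sum_le_sum
  intro j _
  set S := Finset.univ.filter (fun i => G i = j) with hS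
  set A := ∑ i ∈ S, (s i) ^ 2 with hA
  set B := ∑ i ∈ S, (clampProj l u s i - s i) ^ 2 with hB
  have hδj : ∀ i ∈ S, δstar i = if A - B > 2 * lam / L then clampProj l u s i else 0 := by
    intro i hi
    rw [Finset.mem_filter] at hi
    have hGi : G i = j := hi.2
    rw [hδstar i]
    simp only [hGi]
    rfl
  have hBle : ∀ x : Fin n → ℝ, inBox l u x → B ≤ ∑ i ∈ S, (x i - s i) ^ 2 := by
    intro x hx
    apply Finset.sum_le_sum
    intro i _
    exact clamp_sq_le ((hlu i).1.trans (hlu i).2) (hx i).1 (hx i).2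
  have hAeq : ∀ x : Fin n → ℝ, (∀ i ∈ S, x i = 0) → ∑ i ∈ S, (x i - s i) ^ 2 = A := by
    intro x hx
    apply Finset.sum_congr rfl
    intro i hi
    rw [hx i hi]; ring
  by_cases hc : A - B > 2 * lam / L
  · have h1 : ∑ i ∈ S, (δstar i - s i) ^ 2 = B := by
      apply Finset.sum_congr rfl
      intro i hi
      rw [hδj i hi, if_pos hc]
    rw [h1]
    have hkey : 2 * lam < (A - B) * L := (div_lt_iff₀ hL).mp hc
    have hind : (if ∃ i, G i = j ∧ δstar i ≠ 0 then (1 : ℝ) else 0) ≤ 1 := by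
      split <;> norm_num
    by_cases hd : ∃ i, G i = j ∧ δ i ≠ 0
    · rw [if_pos hd]
      have hBδ := hBle δ hδ
      nlinarith
    · rw [if_neg hd]
      have hz : ∀ i ∈ S, δ i = 0 := by
        intro i hi
        by_contra h
        exact hd ⟨i, (Finset.mem_filter.mp hi).2, h⟩
      rw [hAeq δ hz]
      nlinarith
  · have hz : ∀ i ∈ S, δstar i = 0 := fun i hi => by rw [hδj i hi, if_neg hc]
    have h1 : ∑ i ∈ S, (δstar i - s i) ^ 2 = A := hAeq δstar hz
    have hind0 : (if ∃ i, G i = j ∧ δstar i ≠ 0 then (1 : ℝ) else 0) = 0 := by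
      rw [if_neg]
      rintro ⟨i, hGi, hne⟩
      exact hne (hz i (Finset.mem_filter.mpr ⟨Finset.mem_univ _, hGi⟩))
    rw [h1, hind0]
    have hkey : (A - B) * L ≤ 2 * lam := (le_div_iff₀ hL).mp (not_lt.mp hc)
    by_cases hd : ∃ i, G i = j ∧ δ i ≠ 0
    · rw [if_pos hd]
      have hBδ := hBle δ hδ
      nlinarith
    · rw [if_neg hd]
      have hzδ : ∀ i ∈ S, δ i = 0 := by
        intro i hi
        by_contra h
        exact hd ⟨i, (Finset.mem_filter.mp hi).2, h⟩
      rw [hAeq δ hzδ]
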